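/- Let z : [0, ∞) → 𝓗 be a function into a normed space such that sup_{t≥0} |z(t)| ≤ c|z(0)| and ‖z‖_{L²((0,∞);𝓗)} ≤ c|z(0)| for a constant c ≥ 1, where these bounds hold along the flow in the sense that for every s ≥ 0 the shifted trajectory t ↦ z(t+s) satisfies the same bounds with initial value z(s). Then for every R > 0 and ρ > 0, setting T = c⁴R²/ρ², one has |z(t)| ≤ ρ for all t ≥ T whenever |z(0)| ≤ R. -/

import Mathlib

open MeasureTheory Set

/-- Abstract version of Lemma 3.2: if a continuous trajectory `z` satisfies, along the flow
(i.e. for every shift `s ≥ 0`), the sup bound `‖z(t+s)‖ ≤ c ‖z(s)‖` and the `L²` bound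
`∫_{0}^{∞} ‖z(t+s)‖² dt ≤ c² ‖z(s)‖²` with a constant `c ≥ 1`, then for every `R, ρ > 0`,
setting `T = c⁴ R² / ρ²`, one has `‖z(t)‖ ≤ ρ` for all `t ≥ T` whenever `‖z(0)‖ ≤ R`. -/
theorem stmt_4 {𝓗 : Type*} [NormedAddCommGroup 𝓗]
    (z : ℝ → 𝓗) (hz : Continuous z) (c : ℝ) (hc : 1 ≤ c)
    (hsup : ∀ s, 0 ≤ s → ∀ t, 0 ≤ t → ‖z (t + s)‖ ≤ c * ‖z s‖)
    (hint : ∀ s, 0 ≤ s → IntegrableOn (fun t => ‖z (t + s)‖ ^ 2) (Ioi (0 : ℝ)))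
    (hL2 : ∀ s, 0 ≤ s → ∫ t in Ioi (0 : ℝ), ‖z (t + s)‖ ^ 2 ≤ c ^ 2 * ‖z s‖ ^ 2)
    (R ρ : ℝ) (hR : 0 < R) (hρ : 0 < ρ) (h0 : ‖z 0‖ ≤ R) :
    ∀ t, c ^ 4 * R ^ 2 / ρ ^ 2 ≤ t → ‖z t‖ ≤ ρ := by
  intro t ht
  set T := c ^ 4 * R ^ 2 / ρ ^ 2 with hTdef
  have hc0 : (0 : ℝ) < c := lt_of_lt_of_le one_pos hc
  have hT0 : 0 < T := by positivity
  by_cases h : ∃ t₀ ∈ Icc (0 : ℝ) T, ‖z t₀‖ ≤ ρ / c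
  · obtain ⟨t₀, ht₀, hle⟩ := h
    have h1 : ‖z ((t - t₀) + t₀)‖ ≤ c * ‖z t₀‖ :=
      hsup t₀ ht₀.1 (t - t₀) (by linarith [ht₀.2])
    have heq : (t - t₀) + t₀ = t := by ring
    rw [heq] at h1
    calc ‖z t‖ ≤ c * ‖z t₀‖ := h1
      _ ≤ c * (ρ / c) := by
          exact mul_le_mul_of_nonneg_left hle hc0.le
      _ = ρ := by field_simp
  · push_neg at h
    exfalso
    obtain ⟨t₁, ht₁, hmin⟩ := (isCompact_Icc : IsCompact (Icc (0 : ℝ) T)).exists_isMinOn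
      (nonempty_Icc.2 hT0.le) (hz.norm.continuousOn)
    set m := ‖z t₁‖ with hm
    have hmρ : ρ / c < m := h t₁ ht₁
    have hintc : IntegrableOn (fun s => ‖z s‖ ^ 2) (Ioi (0 : ℝ)) := by
      simpa using hint 0 le_rfl
    have hbound : ∀ s ∈ Ioo (0 : ℝ) T, m ^ 2 ≤ ‖z s‖ ^ 2 := by
      intro s hs
      have : m ≤ ‖z s‖ := hmin ⟨hs.1.le, hs.2.le⟩
      have hm0 : 0 ≤ m := norm_nonneg _
      nlinarith
    have h2 : m ^ 2 * T ≤ ∫ s in Ioo (0 : ℝ) T, ‖z s‖ ^ 2 := by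
      have := setIntegral_ge_of_const_le (measurableSet_Ioo)
        (by simp [Real.volume_Ioo]) hbound
        (hintc.mono_set Ioo_subset_Ioi_self)
      simp [Real.volume_Ioo, hT0.le, max_eq_left hT0.le] at this
      linarith
    have h3 : ∫ s in Ioo (0 : ℝ) T, ‖z s‖ ^ 2 ≤ ∫ s in Ioi (0 : ℝ), ‖z s‖ ^ 2 := by
      apply setIntegral_mono_set hintc
      · filter_upwards with s using sq_nonneg _
      · exact HasSubset.Subset.eventuallyLE Ioo_subset_Ioi_self
    have h4 : ∫ s in Ioi (0 : ℝ), ‖z s‖ ^ 2 ≤ c ^ 2 * ‖z 0‖ ^ 2 := by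
      simpa using hL2 0 le_rfl
    have hTρ : T * ρ ^ 2 = c ^ 4 * R ^ 2 := by
      rw [hTdef]; field_simp
    have hz0 : 0 ≤ ‖z 0‖ := norm_nonneg _
    have hmρ2 : ρ ^ 2 / c ^ 2 < m ^ 2 := by
      have hρc : 0 < ρ / c := div_pos hρ hc0
      have : (ρ / c) ^ 2 < m ^ 2 := by nlinarith
      calc ρ ^ 2 / c ^ 2 = (ρ / c) ^ 2 := by ring
        _ < m ^ 2 := this
    -- m^2 * T > (ρ^2/c^2) * T = c^2 R^2 ≥ c^2 ‖z 0‖^2 ≥ m^2 * T, contradiction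
    have key : (ρ ^ 2 / c ^ 2) * T = c ^ 2 * R ^ 2 := by
      field_simp
      nlinarith [hTρ]
    have hA : c ^ 2 * ‖z 0‖ ^ 2 ≤ c ^ 2 * R ^ 2 := by
      have := pow_le_pow_left₀ hz0 h0 2
      nlinarith [sq_nonneg c]
    linarith [mul_lt_mul_of_pos_right hmρ2 hT0, h2, h3, h4, hA, key]
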